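/- Let Φ be a Young function, φ ∈ G^dec, and f ∈ L^{(Φ,φ)}(ℝⁿ). For a ball B = B(a,r), if the support of f is disjoint from 2B = B(a,2r), then Mf(x) ≤ C Φ⁻¹(φ(r)) ‖f‖_{L^{(Φ,φ)}} for all x ∈ B, where C depends only on Φ and φ. -/

import Mathlib

open MeasureTheory ENNReal NNReal Metric Set Filter Topology

noncomputable def geninv (Φ : ℝ≥0∞ → ℝ≥0∞) (u : ℝ≥0∞) : ℝ≥0∞ :=
  sInf {t : ℝ≥0∞ | u < Φ t}

/-- Generalized Young function (class Φ_Y of the paper): increasing, vanishing at 0,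
infinite at ∞, convex, left continuous, nondegenerate. -/
def IsYoung (Φ : ℝ≥0∞ → ℝ≥0∞) : Prop :=
  Monotone Φ ∧ Φ 0 = 0 ∧ Φ ⊤ = ⊤ ∧
    (∀ x y a b : ℝ≥0∞, a + b = 1 → Φ (a * x + b * y) ≤ a * Φ x + b * Φ y) ∧
    (∀ t : ℝ≥0∞, 0 < t → ContinuousWithinAt Φ (Set.Iio t) t) ∧
    (∃ t : ℝ≥0∞, 0 < t ∧ Φ t < ⊤) ∧ (∃ t : ℝ≥0∞, t ≠ ⊤ ∧ 0 < Φ t)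

/-- The class `G^dec`: positive, almost decreasing, and `r ↦ φ(r) rⁿ` almost increasing. -/
def Gdec (n : ℕ) (φ : ℝ → ℝ≥0∞) : Prop :=
  (∀ r : ℝ, 0 < r → 0 < φ r ∧ φ r < ⊤) ∧
    ∃ C : ℝ≥0∞, 0 < C ∧ C ≠ ⊤ ∧ ∀ r s : ℝ, 0 < r → r < s →
      φ s ≤ C * φ r ∧ φ r * ENNReal.ofReal r ^ n ≤ C * (φ s * ENNReal.ofReal s ^ n)

/-- Orlicz–Morrey functional on a single ball `B(a,r)`. -/
noncomputable def ballNorm (Φ : ℝ≥0∞ → ℝ≥0∞) (φ : ℝ → ℝ≥0∞) {d : ℕ}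
    (a : EuclideanSpace ℝ (Fin d)) (r : ℝ) (f : EuclideanSpace ℝ (Fin d) → ℝ≥0∞) : ℝ≥0∞ :=
  sInf {l : ℝ≥0∞ | 0 < l ∧
    (∫⁻ x in ball a r, Φ (f x / l)) ≤ φ r * volume (ball a r)}

/-- Weak Orlicz–Morrey functional on a single ball `B(a,r)`. -/
noncomputable def wBallNorm (Φ : ℝ≥0∞ → ℝ≥0∞) (φ : ℝ → ℝ≥0∞) {d : ℕ}
    (a : EuclideanSpace ℝ (Fin d)) (r : ℝ) (f : EuclideanSpace ℝ (Fin d) → ℝ≥0∞) : ℝ≥0∞ :=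
  sInf {l : ℝ≥0∞ | 0 < l ∧ ∀ t : ℝ≥0∞, 0 < t → t ≠ ⊤ →
    Φ t * volume {x ∈ ball a r | t < f x / l} ≤ φ r * volume (ball a r)}

/-- Orlicz–Morrey norm. -/
noncomputable def omNorm (Φ : ℝ≥0∞ → ℝ≥0∞) (φ : ℝ → ℝ≥0∞) {d : ℕ}
    (f : EuclideanSpace ℝ (Fin d) → ℝ≥0∞) : ℝ≥0∞ :=
  ⨆ (a : EuclideanSpace ℝ (Fin d)) (r : ℝ) (_ : 0 < r), ballNorm Φ φ a r f

/-- Weak Orlicz–Morrey norm. -/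
noncomputable def womNorm (Φ : ℝ≥0∞ → ℝ≥0∞) (φ : ℝ → ℝ≥0∞) {d : ℕ}
    (f : EuclideanSpace ℝ (Fin d) → ℝ≥0∞) : ℝ≥0∞ :=
  ⨆ (a : EuclideanSpace ℝ (Fin d)) (r : ℝ) (_ : 0 < r), wBallNorm Φ φ a r f

/-- Hardy–Littlewood maximal operator (for `ℝ≥0∞`-valued functions). -/
noncomputable def maxOp {d : ℕ} (f : EuclideanSpace ℝ (Fin d) → ℝ≥0∞)
    (x : EuclideanSpace ℝ (Fin d)) : ℝ≥0∞ :=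
  ⨆ (a : EuclideanSpace ℝ (Fin d)) (r : ℝ) (_ : 0 < r) (_ : x ∈ ball a r),
    (volume (ball a r))⁻¹ * ∫⁻ y in ball a r, f y

private lemma aux_scale {Φ : ℝ≥0∞ → ℝ≥0∞} (h0 : Φ 0 = 0) (htop : Φ ⊤ = ⊤)
    (hconv : ∀ x y a b : ℝ≥0∞, a + b = 1 → Φ (a * x + b * y) ≤ a * Φ x + b * Φ y)
    {K : ℝ≥0∞} (hK : 1 ≤ K) (hKt : K ≠ ⊤) (t : ℝ≥0∞) :
    K * Φ t ≤ Φ (K * t) := by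
  have hK0 : K ≠ 0 := by rintro rfl; simp at hK
  rcases eq_or_ne t ⊤ with rfl | ht
  · rw [ENNReal.mul_top hK0, htop]; exact le_top
  · have ha : K⁻¹ ≤ 1 := ENNReal.inv_le_one.mpr hK
    have hab : K⁻¹ + (1 - K⁻¹) = 1 := add_tsub_cancel_of_le ha
    have h := hconv (K * t) 0 K⁻¹ (1 - K⁻¹) hab
    rw [mul_zero, add_zero, h0, mul_zero, add_zero, ← mul_assoc,
      ENNReal.inv_mul_cancel hK0 hKt, one_mul] at h
    calc K * Φ t ≤ K * (K⁻¹ * Φ (K * t)) := mul_le_mul_right h K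
      _ = Φ (K * t) := by rw [← mul_assoc, ENNReal.mul_inv_cancel hK0 hKt, one_mul]

private lemma aux_mul_le {Φ : ℝ≥0∞ → ℝ≥0∞} (h0 : Φ 0 = 0) (htop : Φ ⊤ = ⊤)
    (hconv : ∀ x y a b : ℝ≥0∞, a + b = 1 → Φ (a * x + b * y) ≤ a * Φ x + b * Φ y)
    {t u : ℝ≥0∞} (ht : t ≠ 0) (htu : t ≤ u) : Φ t * u ≤ t * Φ u := by
  rcases eq_or_ne u ⊤ with rfl | hu
  · rw [htop, ENNReal.mul_top ht]; exact le_top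
  have htt : t ≠ ⊤ := ne_top_of_le_ne_top hu htu
  have hK : 1 ≤ u / t := by
    rw [ENNReal.le_div_iff_mul_le (Or.inl ht) (Or.inl htt), one_mul]; exact htu
  have hKt : u / t ≠ ⊤ := (ENNReal.div_lt_top hu ht).ne
  have h := aux_scale h0 htop hconv hK hKt t
  rw [ENNReal.div_mul_cancel ht htt] at h
  calc Φ t * u = (t * (u / t)) * Φ t := by rw [ENNReal.mul_div_cancel ht htt, mul_comm]
    _ = t * (u / t * Φ t) := mul_assoc _ _ _
    _ ≤ t * Φ u := mul_le_mul_right h t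

private lemma geninv_scale {Φ : ℝ≥0∞ → ℝ≥0∞} (h0 : Φ 0 = 0) (htop : Φ ⊤ = ⊤)
    (hconv : ∀ x y a b : ℝ≥0∞, a + b = 1 → Φ (a * x + b * y) ≤ a * Φ x + b * Φ y)
    {u v K : ℝ≥0∞} (huv : v ≤ K * u) (hK : 1 ≤ K) (hKt : K ≠ ⊤) :
    geninv Φ v ≤ K * geninv Φ u := by
  have hK0 : K ≠ 0 := by rintro rfl; simp at hK
  have h1 : ∀ t ∈ {t : ℝ≥0∞ | u < Φ t}, geninv Φ v / K ≤ t := by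
    intro t ht
    have h2 : v < Φ (K * t) :=
      lt_of_le_of_lt huv (lt_of_lt_of_le ((ENNReal.mul_lt_mul_iff_right hK0 hKt).mpr ht)
        (aux_scale h0 htop hconv hK hKt t))
    have h3 : geninv Φ v ≤ K * t := sInf_le h2
    rw [ENNReal.div_le_iff_le_mul (Or.inl hK0) (Or.inl hKt)]
    rwa [mul_comm] at h3
  have h3 : geninv Φ v / K ≤ geninv Φ u := le_sInf h1
  rw [ENNReal.div_le_iff_le_mul (Or.inl hK0) (Or.inl hKt)] at h3
  rwa [mul_comm] at h3

private lemma geninv_lt_top {Φ : ℝ≥0∞ → ℝ≥0∞} (h0 : Φ 0 = 0) (htop : Φ ⊤ = ⊤)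
    (hconv : ∀ x y a b : ℝ≥0∞, a + b = 1 → Φ (a * x + b * y) ≤ a * Φ x + b * Φ y)
    (hnd : ∃ t : ℝ≥0∞, t ≠ ⊤ ∧ 0 < Φ t) {u : ℝ≥0∞} (hu : u ≠ ⊤) :
    geninv Φ u < ⊤ := by
  obtain ⟨t₁, ht₁top, ht₁pos⟩ := hnd
  rcases eq_or_ne (Φ t₁) ⊤ with hft | hft
  · refine lt_of_le_of_lt (sInf_le ?_) (lt_top_iff_ne_top.mpr ht₁top)
    show u < Φ t₁
    rw [hft]; exact lt_top_iff_ne_top.mpr hu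
  · set K := u / Φ t₁ + 1 with hKdef
    have hK1 : 1 ≤ K := le_add_self
    have hdnt : u / Φ t₁ ≠ ⊤ := (ENNReal.div_lt_top hu ht₁pos.ne').ne
    have hKt : K ≠ ⊤ := by
      simp only [hKdef, Ne, ENNReal.add_eq_top, hdnt, one_ne_top, or_self, not_false_iff]
    have hscale := aux_scale h0 htop hconv hK1 hKt t₁
    have hlt : u < Φ (K * t₁) := by
      refine lt_of_lt_of_le ?_ hscale
      rw [hKdef, add_mul, one_mul, ENNReal.div_mul_cancel ht₁pos.ne' hft]
      exact ENNReal.lt_add_right hu ht₁pos.ne'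
    exact lt_of_le_of_lt (sInf_le hlt)
      (ENNReal.mul_lt_top (lt_top_iff_ne_top.mpr hKt) (lt_top_iff_ne_top.mpr ht₁top))

private lemma ball_est {α : Type*} [MeasurableSpace α] (μ : Measure α)
    {Φ : ℝ≥0∞ → ℝ≥0∞} (hmono : Monotone Φ) (h0 : Φ 0 = 0) (htop : Φ ⊤ = ⊤)
    (hconv : ∀ x y a b : ℝ≥0∞, a + b = 1 → Φ (a * x + b * y) ≤ a * Φ x + b * Φ y)
    {B : Set α} (hB : MeasurableSet B) (hBt : μ B ≠ ⊤)
    {w : ℝ≥0∞} (hw0 : w ≠ 0) (hwt : w ≠ ⊤)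
    {f : α → ℝ≥0∞} {l : ℝ≥0∞} (hl0 : l ≠ 0) (hlt : l ≠ ⊤)
    (hint : (∫⁻ x in B, Φ (f x / l) ∂μ) ≤ w * μ B) :
    (∫⁻ x in B, f x ∂μ) ≤ 2 * geninv Φ w * l * μ B := by
  set ν := μ.restrict B with hν
  rcases eq_or_ne (μ B) 0 with hB0 | hB0
  · have : ν = 0 := Measure.restrict_eq_zero.mpr hB0
    rw [this, lintegral_zero_measure]; exact zero_le
  obtain ⟨g, hgm, hgle, hgeq⟩ := exists_measurable_le_lintegral_eq (μ := ν) (fun x => f x / l)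
  have hΦgm : Measurable fun x => Φ (g x) := hmono.measurable.comp hgm
  have hΦg : (∫⁻ x, Φ (g x) ∂ν) ≤ w * μ B :=
    le_trans (lintegral_mono fun x => hmono (hgle x)) hint
  have key : ∀ t, w < Φ t → (∫⁻ x, g x ∂ν) ≤ 2 * μ B * t := by
    intro t htw
    have ht0 : t ≠ 0 := by rintro rfl; rw [h0] at htw; exact (not_lt_of_ge (zero_le)) htw
    set A := {x | t < g x} with hA
    have hAm : MeasurableSet A := measurableSet_lt measurable_const hgm
    have hsplit : (∫⁻ x, g x ∂ν) = (∫⁻ x in A, g x ∂ν) + ∫⁻ x in Aᶜ, g x ∂ν :=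
      (lintegral_add_compl g hAm).symm
    have hcompl : (∫⁻ x in Aᶜ, g x ∂ν) ≤ t * μ B := by
      calc (∫⁻ x in Aᶜ, g x ∂ν) ≤ ∫⁻ _ in Aᶜ, t ∂ν :=
            setLIntegral_mono' hAm.compl (fun x hx => le_of_not_gt hx)
        _ = t * ν Aᶜ := setLIntegral_const _ _
        _ ≤ t * μ B := by
            refine mul_le_mul_right ?_ t
            calc ν Aᶜ ≤ ν univ := measure_mono (subset_univ _)
              _ = μ B := by rw [hν, Measure.restrict_apply_univ]
    have hΦgA : (∫⁻ x in A, Φ (g x) ∂ν) ≤ w * μ B :=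
      le_trans (setLIntegral_le_lintegral _ _) hΦg
    have hmain : (∫⁻ x in A, g x ∂ν) ≤ t * μ B := by
      have hI : Φ t * ∫⁻ x in A, g x ∂ν ≤ t * ∫⁻ x in A, Φ (g x) ∂ν := by
        rw [← lintegral_const_mul _ hgm, ← lintegral_const_mul _ hΦgm]
        refine setLIntegral_mono' hAm (fun x hx => ?_)
        exact aux_mul_le h0 htop hconv ht0 (le_of_lt hx)
      rcases eq_or_ne (Φ t) ⊤ with hft | hft
      · have hAle : Φ t * ν A ≤ w * μ B := by
          refine le_trans ?_ hΦgA
          rw [← setLIntegral_const A (Φ t)]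
          exact setLIntegral_mono' hAm (fun x hx => hmono (le_of_lt hx))
        have hA0 : ν A = 0 := by
          by_contra hne
          rw [hft, ENNReal.top_mul hne] at hAle
          exact (ENNReal.mul_ne_top hwt hBt) (top_le_iff.mp hAle)
        rw [setLIntegral_measure_zero _ _ hA0]
        exact zero_le
      · have hft0 : Φ t ≠ 0 := (lt_of_le_of_lt (zero_le) htw).ne'
        have h2 : Φ t * ∫⁻ x in A, g x ∂ν ≤ Φ t * (t * μ B) := by
          refine hI.trans ?_
          calc t * ∫⁻ x in A, Φ (g x) ∂ν ≤ t * (w * μ B) := mul_le_mul_right hΦgA t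
            _ ≤ t * (Φ t * μ B) := mul_le_mul_right (mul_le_mul_left htw.le _) t
            _ = Φ t * (t * μ B) := by ring
        exact (ENNReal.mul_le_mul_iff_right hft0 hft).mp h2
    calc (∫⁻ x, g x ∂ν) = _ := hsplit
      _ ≤ t * μ B + t * μ B := add_le_add hmain hcompl
      _ = 2 * μ B * t := by ring
  -- conclude via sInf
  have hc0 : (2 : ℝ≥0∞) * μ B ≠ 0 := by simp [hB0]
  have hct : (2 : ℝ≥0∞) * μ B ≠ ⊤ := ENNReal.mul_ne_top ENNReal.ofNat_ne_top hBt
  have hgl : (∫⁻ x, g x ∂ν) ≤ 2 * μ B * geninv Φ w := by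
    have hdiv : (∫⁻ x, g x ∂ν) / (2 * μ B) ≤ geninv Φ w := by
      refine le_sInf (fun t ht => ?_)
      rw [ENNReal.div_le_iff_le_mul (Or.inl hc0) (Or.inl hct), mul_comm]
      exact key t ht
    rw [ENNReal.div_le_iff_le_mul (Or.inl hc0) (Or.inl hct), mul_comm] at hdiv
    exact hdiv
  have hfl : (∫⁻ x in B, f x ∂μ) = l * ∫⁻ x, g x ∂ν := by
    rw [← hgeq, ← lintegral_const_mul' l _ hlt]
    refine lintegral_congr (fun x => ?_)
    rw [ENNReal.mul_div_cancel hl0 hlt]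
  calc (∫⁻ x in B, f x ∂μ) = l * ∫⁻ x, g x ∂ν := hfl
    _ ≤ l * (2 * μ B * geninv Φ w) := mul_le_mul_right hgl l
    _ = 2 * geninv Φ w * l * μ B := by ring

theorem stmt13' {d : ℕ} (Φ : ℝ≥0∞ → ℝ≥0∞)
    (hmono : Monotone Φ) (h0 : Φ 0 = 0) (htop : Φ ⊤ = ⊤)
    (hconv : ∀ x y a b : ℝ≥0∞, a + b = 1 → Φ (a * x + b * y) ≤ a * Φ x + b * Φ y)
    (hnd : ∃ t : ℝ≥0∞, t ≠ ⊤ ∧ 0 < Φ t)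
    (φ : ℝ → ℝ≥0∞)
    (hpos : ∀ r : ℝ, 0 < r → 0 < φ r ∧ φ r < ⊤)
    (C₀ : ℝ≥0∞) (hC00 : 0 < C₀) (hC0t : C₀ ≠ ⊤)
    (hCp : ∀ r s : ℝ, 0 < r → r < s →
      φ s ≤ C₀ * φ r ∧ φ r * ENNReal.ofReal r ^ d ≤ C₀ * (φ s * ENNReal.ofReal s ^ d))
    (f : EuclideanSpace ℝ (Fin d) → ℝ≥0∞) (N : ℝ≥0∞) (hN : N ≠ ⊤)
    (hballN : ∀ (b : EuclideanSpace ℝ (Fin d)) (s : ℝ), 0 < s →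
      sInf {l : ℝ≥0∞ | 0 < l ∧
        (∫⁻ x in ball b s, Φ (f x / l)) ≤ φ s * volume (ball b s)} ≤ N)
    (a : EuclideanSpace ℝ (Fin d)) (r : ℝ) (hr : 0 < r)
    (hsupp : ∀ y ∈ ball a (2 * r), f y = 0)
    (x : EuclideanSpace ℝ (Fin d)) (hx : x ∈ ball a r) :
    (⨆ (b : EuclideanSpace ℝ (Fin d)) (s : ℝ) (_ : 0 < s) (_ : x ∈ ball b s),
      (volume (ball b s))⁻¹ * ∫⁻ y in ball b s, f y) ≤
      2 * (C₀ * C₀ * 2 ^ d + 1) * geninv Φ (φ r) * N := by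
  set K := C₀ * C₀ * 2 ^ d + 1 with hKdef
  have hK1 : 1 ≤ K := le_add_self
  have h2d0 : (2 : ℝ≥0∞) ^ d ≠ 0 := pow_ne_zero d two_ne_zero
  have h2dt : (2 : ℝ≥0∞) ^ d ≠ ⊤ := ENNReal.pow_ne_top ENNReal.ofNat_ne_top
  have hKt : K ≠ ⊤ := by
    rw [hKdef]
    exact ENNReal.add_ne_top.mpr
      ⟨ENNReal.mul_ne_top (ENNReal.mul_ne_top hC0t hC0t) h2dt, one_ne_top⟩
  have hφr := hpos r hr
  have hginv : geninv Φ (φ r) < ⊤ := geninv_lt_top h0 htop hconv hnd hφr.2.ne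
  set b0 := 2 * K * geninv Φ (φ r) with hb0
  have hb0t : b0 ≠ ⊤ :=
    ENNReal.mul_ne_top (ENNReal.mul_ne_top ENNReal.ofNat_ne_top hKt) hginv.ne
  have hmain : ∀ l : ℝ≥0∞, N < l → l ≠ ⊤ →
      (⨆ (b : EuclideanSpace ℝ (Fin d)) (s : ℝ) (_ : 0 < s) (_ : x ∈ ball b s),
        (volume (ball b s))⁻¹ * ∫⁻ y in ball b s, f y) ≤ b0 * l := by
    intro l hNl hlt
    have hl0 : l ≠ 0 := (lt_of_le_of_lt (zero_le) hNl).ne'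
    refine iSup_le fun b => iSup_le fun s => iSup_le fun hs => iSup_le fun hxb => ?_
    by_cases hzero : ∀ y ∈ ball b s, f y = 0
    · have hz : (∫⁻ y in ball b s, f y) = 0 := by
        have : (∫⁻ y in ball b s, f y) = ∫⁻ y in ball b s, 0 := by
          refine lintegral_congr_ae ?_
          filter_upwards [ae_restrict_mem measurableSet_ball] with y hy using hzero y hy
        simpa using this
      rw [hz, mul_zero]; exact zero_le
    · push_neg at hzero
      obtain ⟨y, hyb, hyf⟩ := hzero
      have hyfar : y ∉ ball a (2 * r) := fun h => hyf (hsupp y h)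
      have hr2 : (0 : ℝ) < r / 2 := by linarith
      have hrs : r / 2 < s := by
        rw [mem_ball] at hyb hxb hx
        rw [mem_ball, not_lt] at hyfar
        have h1 : dist y a ≤ dist y x + dist x a := dist_triangle _ _ _
        have h2 : dist y x ≤ dist y b + dist b x := dist_triangle _ _ _
        have hbx : dist b x < s := by rw [dist_comm]; exact hxb
        linarith
      have hs0 : (0 : ℝ) < s := lt_trans hr2 hrs
      -- φ s ≤ K * φ r
      have hR0 : ENNReal.ofReal r ≠ 0 := by
        simp only [Ne, ENNReal.ofReal_eq_zero, not_le]; exact hr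
      have hRd0 : ENNReal.ofReal r ^ d ≠ 0 := pow_ne_zero d hR0
      have hRdt : ENNReal.ofReal r ^ d ≠ ⊤ := ENNReal.pow_ne_top ENNReal.ofReal_ne_top
      have hhalf : ENNReal.ofReal (r / 2) = ENNReal.ofReal r / 2 := by
        rw [ENNReal.ofReal_div_of_pos (by norm_num : (0:ℝ) < 2)]
        norm_num
      have hcanc : ENNReal.ofReal (r / 2) ^ d * 2 ^ d = ENNReal.ofReal r ^ d := by
        rw [hhalf, div_eq_mul_inv, mul_pow, mul_assoc, ← ENNReal.inv_pow,
          ENNReal.inv_mul_cancel h2d0 h2dt, mul_one]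
      have h2 := (hCp (r / 2) r hr2 (by linarith)).2
      have h5 : φ (r / 2) * ENNReal.ofReal r ^ d ≤
          C₀ * 2 ^ d * φ r * ENNReal.ofReal r ^ d := by
        calc φ (r / 2) * ENNReal.ofReal r ^ d
            = φ (r / 2) * ENNReal.ofReal (r / 2) ^ d * 2 ^ d := by rw [mul_assoc, hcanc]
          _ ≤ C₀ * (φ r * ENNReal.ofReal r ^ d) * 2 ^ d := mul_le_mul_left h2 _
          _ = C₀ * 2 ^ d * φ r * ENNReal.ofReal r ^ d := by ring
      have h6 : φ (r / 2) ≤ C₀ * 2 ^ d * φ r := (ENNReal.mul_le_mul_iff_left hRd0 hRdt).mp h5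
      have hφs : φ s ≤ K * φ r := by
        calc φ s ≤ C₀ * φ (r / 2) := (hCp (r / 2) s hr2 hrs).1
          _ ≤ C₀ * (C₀ * 2 ^ d * φ r) := mul_le_mul_right h6 _
          _ = (C₀ * C₀ * 2 ^ d) * φ r := by ring
          _ ≤ K * φ r := mul_le_mul_left le_self_add _
      -- l is admissible for ball b s
      have hlmem : (∫⁻ z in ball b s, Φ (f z / l)) ≤ φ s * volume (ball b s) := by
        have h7 : sInf {l' : ℝ≥0∞ | 0 < l' ∧
            (∫⁻ z in ball b s, Φ (f z / l')) ≤ φ s * volume (ball b s)} < l :=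
          lt_of_le_of_lt (hballN b s hs0) hNl
        obtain ⟨l', ⟨_hl'0, hl'int⟩, hl'l⟩ := sInf_lt_iff.mp h7
        refine le_trans (lintegral_mono fun z => hmono ?_) hl'int
        exact ENNReal.div_le_div_left hl'l.le _
      have hvol0 : volume (ball b s) ≠ 0 := (measure_ball_pos volume b hs0).ne'
      have hvolt : volume (ball b s) ≠ ⊤ := measure_ball_lt_top.ne
      have hφspos := hpos s hs0
      have hest := ball_est volume hmono h0 htop hconv measurableSet_ball hvolt
        hφspos.1.ne' hφspos.2.ne hl0 hlt hlmem
      calc (volume (ball b s))⁻¹ * ∫⁻ z in ball b s, f z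
          ≤ (volume (ball b s))⁻¹ * (2 * geninv Φ (φ s) * l * volume (ball b s)) :=
            mul_le_mul_right hest _
        _ = 2 * geninv Φ (φ s) * l := by
            rw [mul_comm ((volume (ball b s))⁻¹), mul_assoc,
              ENNReal.mul_inv_cancel hvol0 hvolt, mul_one]
        _ ≤ 2 * (K * geninv Φ (φ r)) * l := by
            have := geninv_scale h0 htop hconv hφs hK1 hKt
            exact mul_le_mul_left (mul_le_mul_right this 2) l
        _ = b0 * l := by rw [hb0]; ring
  show _ ≤ b0 * N
  refine ENNReal.le_of_forall_pos_le_add fun ε hε _ => ?_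
  rcases eq_or_ne b0 0 with hb00 | hb00
  · have h := hmain (N + 1) (ENNReal.lt_add_right hN one_ne_zero)
      (by simp [ENNReal.add_eq_top, hN])
    rw [hb00, zero_mul] at h
    exact le_trans h (zero_le)
  · have hδ0 : b0⁻¹ * ε ≠ 0 := by
      refine mul_ne_zero (ENNReal.inv_ne_zero.mpr hb0t) ?_
      exact_mod_cast hε.ne'
    have hδt : b0⁻¹ * (ε : ℝ≥0∞) ≠ ⊤ :=
      ENNReal.mul_ne_top (ENNReal.inv_ne_top.mpr hb00) coe_ne_top
    have hlN : N < N + b0⁻¹ * ε := ENNReal.lt_add_right hN hδ0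
    have hlt' : N + b0⁻¹ * (ε : ℝ≥0∞) ≠ ⊤ := by simp [ENNReal.add_eq_top, hN, hδt]
    have h := hmain _ hlN hlt'
    calc _ ≤ b0 * (N + b0⁻¹ * ε) := h
      _ = b0 * N + b0 * (b0⁻¹ * ε) := mul_add _ _ _
      _ = b0 * N + ε := by rw [← mul_assoc, ENNReal.mul_inv_cancel hb00 hb0t, one_mul]

/-- If `supp f ∩ 2B = ∅`, then `Mf ≲ Φ⁻¹(φ(r)) ‖f‖_{L^{(Φ,φ)}}` on `B`. -/
theorem stmt13 {d : ℕ} (Φ : ℝ≥0∞ → ℝ≥0∞) (hΦ : IsYoung Φ)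
    (φ : ℝ → ℝ≥0∞) (hφ : Gdec d φ) :
    ∃ C : ℝ≥0∞, 0 < C ∧ C ≠ ⊤ ∧
      ∀ f : EuclideanSpace ℝ (Fin d) → ℝ≥0∞, omNorm Φ φ f < ⊤ →
        ∀ (a : EuclideanSpace ℝ (Fin d)) (r : ℝ), 0 < r →
          (∀ y ∈ ball a (2 * r), f y = 0) →
          ∀ x ∈ ball a r, maxOp f x ≤ C * geninv Φ (φ r) * omNorm Φ φ f := by
  obtain ⟨hmono, h0, htop, hconv, _hcont, _hfin, hnd⟩ := hΦ
  obtain ⟨hpos, C₀, hC00, hC0t, hCp⟩ := hφ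
  refine ⟨2 * (C₀ * C₀ * 2 ^ d + 1), ?_, ?_, ?_⟩
  · exact ENNReal.mul_pos two_ne_zero (by simp)
  · exact ENNReal.mul_ne_top ENNReal.ofNat_ne_top
      (ENNReal.add_ne_top.mpr
        ⟨ENNReal.mul_ne_top (ENNReal.mul_ne_top hC0t hC0t) (ENNReal.pow_ne_top ENNReal.ofNat_ne_top),
          one_ne_top⟩)
  intro f hN a r hr hsupp x hx
  have hballN : ∀ (b : EuclideanSpace ℝ (Fin d)) (s : ℝ), 0 < s →
      sInf {l : ℝ≥0∞ | 0 < l ∧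
        (∫⁻ z in ball b s, Φ (f z / l)) ≤ φ s * volume (ball b s)} ≤ omNorm Φ φ f := by
    intro b s hs
    exact le_iSup_of_le b (le_iSup_of_le s (le_iSup_of_le hs le_rfl))
  exact stmt13' Φ hmono h0 htop hconv hnd φ hpos C₀ hC00 hC0t hCp f (omNorm Φ φ f) hN.ne
    hballN a r hr hsupp x hx
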